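/- arXiv:1007.2316 — 3 statements merged into one kernel-verified Lean document; each statement's English description precedes it below -/
import Mathlib

section
/- The solution of the power-control system is monotone in the SIR targets: if p = D·G·p + n·D·𝟙 and p' = D'·G·p' + n·D'·𝟙 both have nonnegative solutions, where D' ≥ D entrywise (diagonal matrices with positive entries), and the spectral radius of D'·G is < 1, then p' ≥ p entrywise. -/
open Matrix Filter Topology

/-- Monotonicity in the SIR targets: if `p = DGp + nD𝟙` and `p' = D'Gp' + nD'𝟙` have
nonnegative solutions with `D' ≥ D` entrywise (positive diagonal matrices) and the spectral
radius of `D'·G` is `< 1`, then `p' ≥ p` entrywise. -/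
theorem stmt_6 (k : ℕ) (d d' : Fin k → ℝ) (hd : ∀ i, 0 < d i) (hd' : ∀ i, 0 < d' i)
    (hdd' : ∀ i, d i ≤ d' i)
    (G : Matrix (Fin k) (Fin k) ℝ) (hG : ∀ i j, 0 ≤ G i j) (hGd : ∀ i, G i i = 0)
    (n : ℝ) (hn : 0 < n)
    (hρ : ∀ μ : ℂ, μ ∈ spectrum ℂ ((Matrix.diagonal d' * G).map (Complex.ofReal)) →
      ‖μ‖ < 1)
    (p p' : Fin k → ℝ) (hp : ∀ i, 0 ≤ p i) (hp' : ∀ i, 0 ≤ p' i)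
    (heq : p = (Matrix.diagonal d * G).mulVec p + n • (Matrix.diagonal d).mulVec 1)
    (heq' : p' = (Matrix.diagonal d' * G).mulVec p' + n • (Matrix.diagonal d').mulVec 1) :
    ∀ i, p i ≤ p' i := by
  intro i0
  haveI : Nonempty (Fin k) := ⟨i0⟩
  letI instN : NormedRing (Matrix (Fin k) (Fin k) ℂ) := Matrix.linftyOpNormedRing
  letI instA : NormedAlgebra ℂ (Matrix (Fin k) (Fin k) ℂ) := Matrix.linftyOpNormedAlgebra
  haveI : CompleteSpace (Matrix (Fin k) (Fin k) ℂ) := FiniteDimensional.complete ℂ _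
  set A : Matrix (Fin k) (Fin k) ℝ := Matrix.diagonal d' * G with hA
  set B : Matrix (Fin k) (Fin k) ℂ := A.map Complex.ofReal with hB
  -- spectral radius < 1
  have hsr : spectralRadius ℂ B < 1 := by
    have h1 : spectralRadius ℂ B < ((1 : NNReal) : ENNReal) :=
      spectrum.spectralRadius_lt_of_forall_lt B fun z hz => by
        exact_mod_cast hρ z hz
    simpa using h1
  obtain ⟨r, hr1, hr2⟩ := ENNReal.lt_iff_exists_nnreal_btwn.mp hsr
  have hr2' : (r : ℝ) < 1 := by exact_mod_cast hr2
  have hgel := spectrum.pow_nnnorm_pow_one_div_tendsto_nhds_spectralRadius B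
  have hev : ∀ᶠ m : ℕ in atTop, ((‖B ^ m‖₊ : ENNReal)) ^ (1 / (m : ℝ)) < (r : ENNReal) :=
    hgel.eventually_lt_const hr1
  have hbound : ∀ᶠ m : ℕ in atTop, ‖B ^ m‖ ≤ (r : ℝ) ^ m := by
    filter_upwards [hev, eventually_ge_atTop 1] with m hm hm1
    have hm0 : (m : ℝ) ≠ 0 := by positivity
    have h2 : (((‖B ^ m‖₊ : ENNReal)) ^ (1 / (m : ℝ))) ^ (m : ℝ) ≤ ((r : ENNReal)) ^ (m : ℝ) :=
      ENNReal.rpow_le_rpow hm.le (by positivity)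
    rw [← ENNReal.rpow_mul, one_div, inv_mul_cancel₀ hm0, ENNReal.rpow_one,
      ENNReal.rpow_natCast] at h2
    have h3 : ‖B ^ m‖₊ ≤ r ^ m := by exact_mod_cast h2
    calc ‖B ^ m‖ = ((‖B ^ m‖₊ : ℝ)) := rfl
      _ ≤ ((r ^ m : NNReal) : ℝ) := by exact_mod_cast h3
      _ = (r : ℝ) ^ m := by push_cast; ring
  have hnorm0 : Tendsto (fun m => ‖B ^ m‖) atTop (𝓝 0) :=
    squeeze_zero' (Eventually.of_forall fun m => norm_nonneg _) hbound
      (tendsto_pow_atTop_nhds_zero_of_lt_one r.coe_nonneg hr2')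
  -- entries of A^m tend to 0
  have hmap : ∀ m : ℕ, B ^ m = (A ^ m).map Complex.ofReal := by
    intro m
    induction m with
    | zero => simp [Matrix.map_one]
    | succ m ih =>
        rw [pow_succ, pow_succ, ih, hB]
        exact (Matrix.map_mul (f := Complex.ofRealHom)).symm
  have hentry : ∀ i j, Tendsto (fun m => (A ^ m) i j) atTop (𝓝 0) := by
    intro i j
    refine squeeze_zero_norm (fun m => ?_) hnorm0
    have h1 : ‖(B ^ m) i j‖₊ ≤ ‖B ^ m‖₊ := by
      rw [Matrix.linfty_opNNNorm_def]
      exact le_trans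
        (Finset.single_le_sum (f := fun j => ‖(B ^ m) i j‖₊) (fun _ _ => zero_le)
          (Finset.mem_univ j))
        (Finset.le_sup (f := fun i => ∑ j, ‖(B ^ m) i j‖₊) (Finset.mem_univ i))
    calc ‖(A ^ m) i j‖ = ‖(B ^ m) i j‖ := by
          rw [hmap, Matrix.map_apply, Complex.norm_real]
      _ ≤ ‖B ^ m‖ := h1
  -- algebraic setup
  set q : Fin k → ℝ := fun i => p' i - p i with hqdef
  set rr : Fin k → ℝ := fun i => (d' i - d i) * ((G.mulVec p) i + n) with hrrdef
  have hrr : ∀ i, 0 ≤ rr i := by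
    intro i
    apply mul_nonneg (sub_nonneg.2 (hdd' i))
    apply add_nonneg _ hn.le
    rw [show (G *ᵥ p) i = ∑ j, G i j * p j from rfl]
    exact Finset.sum_nonneg fun j _ => mul_nonneg (hG i j) (hp j)
  have hpi : ∀ i, p i = (∑ j, d i * G i j * p j) + n * d i := by
    intro i
    conv_lhs => rw [heq]
    simp [Matrix.mulVec, dotProduct, Matrix.diagonal_mul, Matrix.diagonal_apply,
      Finset.sum_ite_eq, mul_comm]
  have hp'i : ∀ i, p' i = (∑ j, d' i * G i j * p' j) + n * d' i := by
    intro i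
    conv_lhs => rw [heq']
    simp [hA, Matrix.mulVec, dotProduct, Matrix.diagonal_mul, Matrix.diagonal_apply,
      Finset.sum_ite_eq, mul_comm]
  have hqv : q = A.mulVec q + rr := by
    funext i
    have h1 := hpi i
    have h2 := hp'i i
    have hAm : (A.mulVec q) i = ∑ j, d' i * G i j * (p' j - p j) := by
      simp [Matrix.mulVec, dotProduct, hA, Matrix.diagonal_mul, hqdef]
    have hGm : (G.mulVec p) i = ∑ j, G i j * p j := rfl
    rw [Pi.add_apply, hAm]
    simp only [Pi.add_apply, hAm, hqdef, hrrdef, hGm]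
    rw [h1, h2]
    have hsum : (∑ j, d' i * G i j * (p' j - p j)) =
        (∑ j, d' i * G i j * p' j) - (∑ j, d' i * G i j * p j) := by
      rw [← Finset.sum_sub_distrib]
      exact Finset.sum_congr rfl fun j _ => by ring
    have hsum2 : (d' i - d i) * (∑ j, G i j * p j) =
        (∑ j, d' i * G i j * p j) - (∑ j, d i * G i j * p j) := by
      rw [Finset.mul_sum, ← Finset.sum_sub_distrib]
      exact Finset.sum_congr rfl fun j _ => by ring
    rw [mul_add, hsum, hsum2]
    ring
  -- nonnegativity of powers of A
  have hApow : ∀ (m : ℕ) i j, 0 ≤ (A ^ m) i j := by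
    intro m
    induction m with
    | zero =>
        intro i j
        rw [pow_zero]
        by_cases h : i = j <;> simp [Matrix.one_apply, h]
    | succ m ih =>
        intro i j
        rw [pow_succ, Matrix.mul_apply]
        refine Finset.sum_nonneg fun t _ => mul_nonneg (ih i t) ?_
        rw [hA, Matrix.diagonal_mul]
        exact mul_nonneg (hd' t).le (hG t j)
  -- partial-sum identity
  have hps : ∀ m : ℕ, q = (∑ t ∈ Finset.range m, (A ^ t) *ᵥ rr) + (A ^ m) *ᵥ q := by
    intro m
    induction m with
    | zero => simp
    | succ m ih =>
        rw [Finset.sum_range_succ]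
        conv_lhs => rw [ih]
        have hstep : (A ^ m) *ᵥ q = (A ^ m) *ᵥ rr + (A ^ (m + 1)) *ᵥ q := by
          conv_lhs => rw [hqv]
          rw [Matrix.mulVec_add, Matrix.mulVec_mulVec, ← pow_succ, add_comm]
        rw [hstep, ← add_assoc]
  -- each partial-sum term is nonnegative
  have hterm : ∀ (t : ℕ) (i : Fin k), 0 ≤ ((A ^ t) *ᵥ rr) i := by
    intro t i
    rw [show ((A ^ t) *ᵥ rr) i = ∑ j, (A ^ t) i j * rr j from rfl]
    exact Finset.sum_nonneg fun j _ => mul_nonneg (hApow t i j) (hrr j)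
  -- tail tends to zero
  have ht : Tendsto (fun m => ((A ^ m) *ᵥ q) i0) atTop (𝓝 0) := by
    have : ∀ m, ((A ^ m) *ᵥ q) i0 = ∑ j, (A ^ m) i0 j * q j := fun m => rfl
    simp only [this]
    have h0 : (0 : ℝ) = ∑ j : Fin k, 0 * q j := by simp
    rw [h0]
    exact tendsto_finset_sum _ fun j _ => (hentry i0 j).mul_const (q j)
  -- tail is below q i0
  have hle : ∀ m, ((A ^ m) *ᵥ q) i0 ≤ q i0 := by
    intro m
    have := congrFun (hps m) i0
    rw [this, Pi.add_apply]
    have : 0 ≤ (∑ t ∈ Finset.range m, (A ^ t) *ᵥ rr) i0 := by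
      rw [Finset.sum_apply]
      exact Finset.sum_nonneg fun t _ => hterm t i0
    linarith
  have : (0 : ℝ) ≤ q i0 := le_of_tendsto' ht hle
  have hq0 : q i0 = p' i0 - p i0 := rfl
  linarith [this, hq0 ▸ this]
end

section
/- Adding a user to a subcarrier cannot decrease the powers of the existing users: let p ∈ ℝ^k be the solution of the power-control system for users S, and p' ∈ ℝ^{k+1} the solution for S ∪ {u} (same D entries and G sub-matrix for the original users, spectral radius of the enlarged D·G matrix < 1). Then p'_i ≥ p_i for every original user i ∈ S. -/
open Matrix Filter

attribute [local instance] Matrix.linftyOpNormedRing Matrix.linftyOpNormedAlgebra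

noncomputable instance stmt7CompleteSpace {m : ℕ} : CompleteSpace (Matrix (Fin m) (Fin m) ℂ) :=
  FiniteDimensional.complete ℂ _

private lemma stmt7_norm_pow_tendsto {m : ℕ} (M : Matrix (Fin (m+1)) (Fin (m+1)) ℝ)
    (hρ : ∀ μ : ℂ, μ ∈ spectrum ℂ (M.map Complex.ofReal) → ‖μ‖ < 1) :
    Tendsto (fun N => ‖M ^ N‖) atTop (nhds 0) := by
  set a := M.map Complex.ofReal with ha
  have hrad : spectralRadius ℂ a < 1 := by
    have := spectrum.spectralRadius_lt_of_forall_lt a (r := 1) ?_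
    · simpa using this
    · intro z hz
      have := hρ z hz
      simpa [← NNReal.coe_lt_coe, coe_nnnorm] using this
  obtain ⟨r, hr1, hr2⟩ := ENNReal.lt_iff_exists_nnreal_btwn.mp hrad
  have hgel := spectrum.pow_nnnorm_pow_one_div_tendsto_nhds_spectralRadius a
  have hev : ∀ᶠ N : ℕ in atTop, (‖a ^ N‖₊ : ENNReal) ^ (1 / (N:ℝ)) < (r : ENNReal) :=
    hgel.eventually_lt_const hr1
  have hnorm_eq : ∀ N : ℕ, ‖M ^ N‖ = ‖a ^ N‖ := by
    intro N
    have hpow : a ^ N = (M ^ N).map Complex.ofReal := by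
      exact
        (map_pow (Complex.ofRealHom.mapMatrix :
          Matrix (Fin (m+1)) (Fin (m+1)) ℝ →+* Matrix (Fin (m+1)) (Fin (m+1)) ℂ) M N).symm
    rw [hpow]
    have : ‖(M ^ N).map Complex.ofReal‖₊ = ‖M ^ N‖₊ := by
      simp only [Matrix.linfty_opNNNorm_def, Matrix.map_apply, Complex.nnnorm_real]
    rw [← coe_nnnorm, ← coe_nnnorm, this]
  have hb : ∀ᶠ N : ℕ in atTop, ‖M ^ N‖ ≤ (r : ℝ) ^ N := by
    filter_upwards [hev, eventually_ge_atTop 1] with N hN hN1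
    have hN0 : (N : ℝ) ≠ 0 := by positivity
    have h1 : ((‖a ^ N‖₊ : ENNReal) ^ (1/(N:ℝ))) ^ (N:ℝ) = (‖a ^ N‖₊ : ENNReal) := by
      rw [← ENNReal.rpow_mul, one_div, inv_mul_cancel₀ hN0, ENNReal.rpow_one]
    have hle : (‖a ^ N‖₊ : ENNReal) ≤ (r : ENNReal) ^ (N : ℝ) :=
      h1 ▸ ENNReal.rpow_le_rpow hN.le (Nat.cast_nonneg N)
    rw [ENNReal.rpow_natCast, ← ENNReal.coe_pow, ENNReal.coe_le_coe] at hle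
    have : ‖a ^ N‖ ≤ ((r ^ N : NNReal) : ℝ) := hle
    rw [hnorm_eq]
    simpa using this
  refine squeeze_zero' (Eventually.of_forall fun N => norm_nonneg _) hb ?_
  have hr2' : (r : ℝ) < 1 := by exact_mod_cast hr2
  exact tendsto_pow_atTop_nhds_zero_of_lt_one (by positivity) hr2'

private lemma stmt7_key {m : ℕ} (M : Matrix (Fin (m+1)) (Fin (m+1)) ℝ)
    (hM : ∀ i j, 0 ≤ M i j)
    (hρ : ∀ μ : ℂ, μ ∈ spectrum ℂ (M.map Complex.ofReal) → ‖μ‖ < 1)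
    (x b : Fin (m+1) → ℝ) (hb : ∀ i, 0 ≤ b i)
    (hx : x = M.mulVec x + b) : ∀ i, 0 ≤ x i := by
  have hpow : ∀ N (i j : Fin (m+1)), 0 ≤ (M ^ N) i j := by
    intro N
    induction N with
    | zero => intro i j; rcases eq_or_ne i j with h | h <;> simp [Matrix.one_apply, h]
    | succ N ih =>
      intro i j
      rw [pow_succ, Matrix.mul_apply]
      exact Finset.sum_nonneg fun l _ => mul_nonneg (ih i l) (hM l j)
  have hmono : ∀ N (i : Fin (m+1)), ((M ^ (N+1)).mulVec x) i ≤ ((M ^ N).mulVec x) i := by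
    intro N i
    have h1 : (M ^ N).mulVec x = (M ^ (N+1)).mulVec x + (M ^ N).mulVec b := by
      conv_lhs => rw [hx]
      rw [Matrix.mulVec_add, Matrix.mulVec_mulVec, ← pow_succ]
    have h2 : 0 ≤ ((M ^ N).mulVec b) i := by
      simp only [Matrix.mulVec, dotProduct]
      exact Finset.sum_nonneg fun l _ => mul_nonneg (hpow N i l) (hb l)
    have := congrFun h1 i
    simp only [Pi.add_apply] at this
    linarith
  have hle : ∀ N (i : Fin (m+1)), ((M ^ N).mulVec x) i ≤ x i := by
    intro N
    induction N with
    | zero => intro i; simp [Matrix.one_mulVec]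
    | succ N ih => intro i; exact (hmono N i).trans (ih i)
  intro i
  have htend : Tendsto (fun N => ((M ^ N).mulVec x) i) atTop (nhds 0) := by
    have hbound : ∀ N : ℕ, ‖((M ^ N).mulVec x) i‖ ≤ ‖M ^ N‖ * ‖x‖ := fun N =>
      (norm_le_pi_norm ((M ^ N).mulVec x) i).trans (Matrix.linfty_opNorm_mulVec _ _)
    have := (stmt7_norm_pow_tendsto M hρ).mul_const ‖x‖
    rw [zero_mul] at this
    exact squeeze_zero_norm hbound this
  exact le_of_tendsto htend (Eventually.of_forall fun N => hle N i)

/-- Adding a user to a subcarrier cannot decrease the powers of the existing users. -/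
theorem stmt_7 (k : ℕ) (d : Fin k → ℝ) (hd : ∀ i, 0 < d i)
    (G : Matrix (Fin k) (Fin k) ℝ) (hG : ∀ i j, 0 ≤ G i j) (hGd : ∀ i, G i i = 0)
    (d' : Fin (k + 1) → ℝ) (hd' : ∀ i, 0 < d' i)
    (hdext : ∀ i : Fin k, d' i.castSucc = d i)
    (G' : Matrix (Fin (k + 1)) (Fin (k + 1)) ℝ)
    (hG' : ∀ i j, 0 ≤ G' i j) (hG'd : ∀ i, G' i i = 0)
    (hGext : ∀ i j : Fin k, G' i.castSucc j.castSucc = G i j)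
    (n : ℝ) (hn : 0 < n)
    (hρ : ∀ μ : ℂ, μ ∈ spectrum ℂ ((Matrix.diagonal d' * G').map (Complex.ofReal)) →
      ‖μ‖ < 1)
    (p : Fin k → ℝ) (hp : ∀ i, 0 ≤ p i)
    (heq : p = (Matrix.diagonal d).mulVec (G.mulVec p + fun _ => n))
    (p' : Fin (k + 1) → ℝ) (hp' : ∀ i, 0 ≤ p' i)
    (heq' : p' = (Matrix.diagonal d').mulVec (G'.mulVec p' + fun _ => n)) :
    ∀ i : Fin k, p i ≤ p' i.castSucc := by
  classical
  set M : Matrix (Fin (k+1)) (Fin (k+1)) ℝ := Matrix.diagonal d' * G' with hM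
  have hMnn : ∀ i j, 0 ≤ M i j := by
    intro i j
    rw [hM, Matrix.diagonal_mul]
    exact mul_nonneg (hd' i).le (hG' i j)
  -- extended old power vector
  set p0 : Fin (k+1) → ℝ := Fin.lastCases 0 p with hp0
  set x : Fin (k+1) → ℝ := p' - p0 with hxdef
  set b : Fin (k+1) → ℝ := x - M.mulVec x with hbdef
  -- row computations
  have hrowp : ∀ i : Fin k, p i = d i * ((G.mulVec p) i) + d i * n := by
    intro i
    simpa [Matrix.mulVec_diagonal, mul_add] using congrFun heq i
  have hrowp' : ∀ i : Fin (k+1), p' i = d' i * ((G'.mulVec p') i) + d' i * n := by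
    intro i
    simpa [Matrix.mulVec_diagonal, mul_add] using congrFun heq' i
  have hMv : ∀ (v : Fin (k+1) → ℝ) (i : Fin (k+1)), (M.mulVec v) i = d' i * (G'.mulVec v) i := by
    intro v i
    rw [hM, ← Matrix.mulVec_mulVec, Matrix.mulVec_diagonal]
  have hp0nn : ∀ i : Fin (k+1), 0 ≤ p0 i := by
    intro i
    induction i using Fin.lastCases with
    | last => simp [hp0]
    | cast j => simpa [hp0] using hp j
  have hbform : ∀ i : Fin (k+1), b i = d' i * n - p0 i + d' i * ((G'.mulVec p0) i) := by
    intro i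
    have h1 : (M.mulVec x) i = (M.mulVec p') i - (M.mulVec p0) i := by
      rw [hxdef, Matrix.mulVec_sub]; rfl
    have h2 : (M.mulVec p') i = p' i - d' i * n := by
      rw [hMv]; linarith [hrowp' i]
    have : b i = x i - (M.mulVec x) i := rfl
    rw [this, h1, h2, hMv]
    simp only [hxdef, Pi.sub_apply]
    ring
  have hb : ∀ i : Fin (k+1), 0 ≤ b i := by
    intro i
    induction i using Fin.lastCases with
    | last =>
      rw [hbform]
      have hsum : 0 ≤ (G'.mulVec p0) (Fin.last k) := by
        simp only [Matrix.mulVec, dotProduct]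
        exact Finset.sum_nonneg fun l _ => mul_nonneg (hG' _ l) (hp0nn l)
      have : p0 (Fin.last k) = 0 := by simp [hp0]
      rw [this]
      have := hd' (Fin.last k)
      nlinarith
    | cast j =>
      rw [hbform]
      have hsum : (G'.mulVec p0) j.castSucc = (G.mulVec p) j := by
        simp only [Matrix.mulVec, dotProduct]
        rw [Fin.sum_univ_castSucc]
        have : p0 (Fin.last k) = 0 := by simp [hp0]
        rw [this, mul_zero, add_zero]
        refine Finset.sum_congr rfl fun l _ => ?_
        rw [hGext j l]
        congr 1
        simp [hp0]
      rw [hsum]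
      have h1 : p0 j.castSucc = p j := by simp [hp0]
      rw [h1, hdext j]
      have := hrowp j
      linarith
  have hxeq : x = M.mulVec x + b := by
    funext i
    simp [hbdef]
  have hx := stmt7_key M hMnn hρ x b hb hxeq
  intro i
  have := hx i.castSucc
  have h1 : x i.castSucc = p' i.castSucc - p i := by
    simp [hxdef, hp0]
  linarith
end

section
/- Padding lemma for the reduction: an instance of P|M_j|C_max ≤ 2 with F₁ + 2F₂ < 2n is feasible if and only if the instance obtained by adding 2n − F₁ − 2F₂ new jobs of length 1, each eligible on all machines, is feasible. -/
open Finset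

/-- Padding lemma: an instance of `P|M_j|C_max ≤ 2` with `F₁ + 2F₂ < 2n` is feasible iff
the instance padded with `2n - F₁ - 2F₂` new length-1 jobs, each eligible on all machines,
is feasible. -/
theorem stmt_13 (n : ℕ) (J : Type) [Fintype J] [DecidableEq J]
    (ℓ : J → ℕ) (hl : ∀ j, ℓ j = 1 ∨ ℓ j = 2)
    (M : J → Finset (Fin n)) (F₁ F₂ t : ℕ)
    (hF₁ : F₁ = (univ.filter (fun j => ℓ j = 1)).card)
    (hF₂ : F₂ = (univ.filter (fun j => ℓ j = 2)).card)
    (hlt : F₁ + 2 * F₂ < 2 * n) (ht : t = 2 * n - F₁ - 2 * F₂) :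
    (∃ a : J → Fin n, (∀ j, a j ∈ M j) ∧
        ∀ k : Fin n, ∑ j ∈ univ.filter (fun j => a j = k), ℓ j ≤ 2) ↔
    (∃ a : J ⊕ Fin t → Fin n, (∀ j : J, a (Sum.inl j) ∈ M j) ∧
        ∀ k : Fin n, ∑ j ∈ univ.filter (fun j => a j = k),
          Sum.elim ℓ (fun _ => 1) j ≤ 2) := by
  constructor
  · rintro ⟨a, ha, hload⟩
    set L : Fin n → ℕ := fun k => ∑ j ∈ univ.filter (fun j => a j = k), ℓ j with hL
    set s : Fin n → ℕ := fun k => 2 - L k with hs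
    have hsumL : ∑ k, L k = F₁ + 2 * F₂ := by
      have h1 : ∑ k, L k = ∑ j, ℓ j := by
        rw [hL]
        exact Finset.sum_fiberwise univ a ℓ
      have h2 : ∑ j, ℓ j = F₁ + 2 * F₂ := by
        have : ∀ j : J, ℓ j = (if ℓ j = 1 then 1 else 0) + (if ℓ j = 2 then 2 else 0) := by
          intro j; rcases hl j with h | h <;> simp [h]
        calc ∑ j, ℓ j = ∑ j, ((if ℓ j = 1 then 1 else 0) + (if ℓ j = 2 then 2 else 0)) :=
              Finset.sum_congr rfl (fun j _ => this j)
          _ = (∑ j, if ℓ j = 1 then 1 else 0) + ∑ j, if ℓ j = 2 then 2 else 0 :=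
              Finset.sum_add_distrib
          _ = F₁ + 2 * F₂ := by
              rw [← Finset.sum_filter, ← Finset.sum_filter]
              simp [Finset.sum_const, hF₁, hF₂, mul_comm]
      rw [h1, h2]
    have hsums : ∑ k, s k = t := by
      have hadd : ∑ k, (s k + L k) = 2 * n := by
        have : ∀ k : Fin n, s k + L k = 2 := fun k =>
          Nat.sub_add_cancel (hload k)
        rw [Finset.sum_congr rfl (fun k _ => this k)]
        simp [mul_comm]
      rw [Finset.sum_add_distrib, hsumL] at hadd
      omega
    have hcard : Fintype.card (Fin t) = Fintype.card (Σ k : Fin n, Fin (s k)) := by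
      simp [Fintype.card_sigma, hsums]
    obtain e := Fintype.equivOfCardEq hcard
    refine ⟨Sum.elim a (fun i => (e i).1), fun j => ha j, fun k => ?_⟩
    have hfiber : (univ.filter fun i : Fin t => (e i).1 = k).card = s k := by
      have h1 : (univ.filter fun i : Fin t => (e i).1 = k)
          = ((univ : Finset (Σ k : Fin n, Fin (s k))).filter
              (fun p => p.1 = k)).map e.symm.toEmbedding := by
        ext i
        simp
      have h2 : ((univ : Finset (Σ k : Fin n, Fin (s k))).filter (fun p => p.1 = k))
          = ({k} : Finset (Fin n)).sigma (fun k => univ) := by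
        ext ⟨a, b⟩
        simp
      rw [h1, Finset.card_map, h2, Finset.card_sigma]
      simp
    calc ∑ j ∈ univ.filter (fun j => Sum.elim a (fun i => (e i).1) j = k),
          Sum.elim ℓ (fun _ => 1) j
        = ∑ j : J ⊕ Fin t, if Sum.elim a (fun i => (e i).1) j = k
            then Sum.elim ℓ (fun _ => 1) j else 0 := (Finset.sum_filter _ _)
      _ = (∑ j : J, if a j = k then ℓ j else 0)
            + ∑ i : Fin t, if (e i).1 = k then 1 else 0 := by
          rw [Fintype.sum_sum_type]
          simp only [Sum.elim_inl, Sum.elim_inr]; rfl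
      _ = L k + (univ.filter fun i : Fin t => (e i).1 = k).card := by
          rw [← Finset.sum_filter, ← Finset.sum_filter]
          simp [hL]
      _ = L k + s k := by rw [hfiber]
      _ ≤ 2 := by have := hload k; simp only [hs, hL] at *; omega
  · rintro ⟨a, ha, hload⟩
    refine ⟨fun j => a (Sum.inl j), fun j => ha j, fun k => ?_⟩
    have hsub : (univ.filter fun j : J => a (Sum.inl j) = k).map
        ⟨Sum.inl, Sum.inl_injective⟩ ⊆ univ.filter (fun j => a j = k) := by
      intro x hx
      simp only [Finset.mem_map, Finset.mem_filter, Finset.mem_univ, true_and,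
        Function.Embedding.coeFn_mk] at hx ⊢
      obtain ⟨j, hj, rfl⟩ := hx
      exact hj
    calc ∑ j ∈ univ.filter (fun j : J => a (Sum.inl j) = k), ℓ j
        = ∑ j ∈ (univ.filter fun j : J => a (Sum.inl j) = k).map
            ⟨Sum.inl, Sum.inl_injective⟩, Sum.elim ℓ (fun _ => 1) j := by
          rw [Finset.sum_map]; rfl
      _ ≤ ∑ j ∈ univ.filter (fun j => a j = k), Sum.elim ℓ (fun _ => 1) j :=
          Finset.sum_le_sum_of_subset hsub
      _ ≤ 2 := hload k
end
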